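/- Let n ≥ 3 be an integer and let a be a real number with 0 ≤ a ≤ (n−2)/(4(n−1)). Let (X, μ) be a measure space and let R : X → ℝ be measurable with r₀ ≤ R(x) ≤ r₁ for μ-a.e. x, where the real numbers r₀ ≤ r₁ satisfy r₀ ≥ ((n−2)/n)·r₁ ≥ 0. Let h, f : X → ℝ be measurable functions such that h, R·h, f², and R·f² are μ-integrable, h ≥ 0 μ-a.e., and ∫_X f² dμ = 1. Set λ := ∫_X h dμ. Then (2(n−1)a − (n−2)/2)·∫_X R·h dμ − (2(n−1)a − n/2)·λ·∫_X R·f² dμ ≥ λ·((n/2)·r₀ − ((n−2)/2)·r₁) ≥ 0. -/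
import Mathlib


open MeasureTheory

/-- Proposition 3.2 of the paper: the eigenvalue-monotonicity estimate along the
unnormalized Yamabe flow for `0 ≤ a ≤ (n−2)/(4(n−1))` when
`min R ≥ ((n−2)/n)·max R ≥ 0`. -/
theorem stmt_6 (n : ℕ) (hn : 3 ≤ n) (a : ℝ)
    (ha0 : 0 ≤ a) (ha1 : a ≤ ((n : ℝ) - 2) / (4 * ((n : ℝ) - 1)))
    {X : Type*} [MeasurableSpace X] (μ : Measure X)
    (R h f : X → ℝ) (hRmeas : Measurable R) (hhmeas : Measurable h)
    (hfmeas : Measurable f)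
    (r₀ r₁ : ℝ) (hr01 : r₀ ≤ r₁)
    (hbound : ∀ᵐ x ∂μ, r₀ ≤ R x ∧ R x ≤ r₁)
    (hcond1 : (((n : ℝ) - 2) / n) * r₁ ≤ r₀)
    (hcond2 : 0 ≤ (((n : ℝ) - 2) / n) * r₁)
    (hh_int : Integrable h μ)
    (hRh_int : Integrable (fun x => R x * h x) μ)
    (hf2_int : Integrable (fun x => (f x) ^ 2) μ)
    (hRf2_int : Integrable (fun x => R x * (f x) ^ 2) μ)
    (hh_nonneg : ∀ᵐ x ∂μ, 0 ≤ h x)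
    (hf2_norm : ∫ x, (f x) ^ 2 ∂μ = 1) :
    (2 * ((n : ℝ) - 1) * a - ((n : ℝ) - 2) / 2) * ∫ x, R x * h x ∂μ
        - (2 * ((n : ℝ) - 1) * a - (n : ℝ) / 2) * (∫ x, h x ∂μ) * ∫ x, R x * (f x) ^ 2 ∂μ
      ≥ (∫ x, h x ∂μ) * (((n : ℝ) / 2) * r₀ - (((n : ℝ) - 2) / 2) * r₁)
    ∧ (∫ x, h x ∂μ) * (((n : ℝ) / 2) * r₀ - (((n : ℝ) - 2) / 2) * r₁) ≥ 0 := by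

  have hn3 : (3:ℝ) ≤ (n:ℝ) := by exact_mod_cast hn
  have hL : 0 ≤ ∫ x, h x ∂μ := integral_nonneg_of_ae hh_nonneg
  have hr0 : 0 ≤ r₀ := le_trans hcond2 hcond1
  have hI1ub : ∫ x, R x * h x ∂μ ≤ r₁ * ∫ x, h x ∂μ := by
    rw [← integral_const_mul]
    exact integral_mono_ae hRh_int (hh_int.const_mul r₁)
      (by filter_upwards [hbound, hh_nonneg] with x hb hh
          exact mul_le_mul_of_nonneg_right hb.2 hh)
  have hI2lb : r₀ ≤ ∫ x, R x * (f x) ^ 2 ∂μ := by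
    have : r₀ * ∫ x, (f x) ^ 2 ∂μ ≤ ∫ x, R x * (f x) ^ 2 ∂μ := by
      rw [← integral_const_mul]
      exact integral_mono_ae (hf2_int.const_mul r₀) hRf2_int
        (by filter_upwards [hbound] with x hb
            exact mul_le_mul_of_nonneg_right hb.1 (sq_nonneg _))
    rwa [hf2_norm, mul_one] at this
  have hI2ub : ∫ x, R x * (f x) ^ 2 ∂μ ≤ r₁ := by
    have : ∫ x, R x * (f x) ^ 2 ∂μ ≤ r₁ * ∫ x, (f x) ^ 2 ∂μ := by
      rw [← integral_const_mul]
      exact integral_mono_ae hRf2_int (hf2_int.const_mul r₁)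
        (by filter_upwards [hbound] with x hb
            exact mul_le_mul_of_nonneg_right hb.2 (sq_nonneg _))
    rwa [hf2_norm, mul_one] at this
  have hKey : 0 ≤ ((n:ℝ)/2) * r₀ - (((n:ℝ)-2)/2) * r₁ := by
    have hnpos : (0:ℝ) < (n:ℝ) := by linarith
    have := hcond1
    rw [div_mul_eq_mul_div, div_le_iff₀ hnpos] at this
    nlinarith
  refine ⟨?_, mul_nonneg hL hKey⟩
  set L := ∫ x, h x ∂μ
  set I1 := ∫ x, R x * h x ∂μ
  set I2 := ∫ x, R x * (f x) ^ 2 ∂μ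
  have hc1 : 2 * ((n:ℝ) - 1) * a - ((n:ℝ) - 2) / 2 ≤ 0 := by
    have hd : (0:ℝ) < 4 * ((n:ℝ) - 1) := by linarith
    rw [le_div_iff₀ hd] at ha1
    nlinarith
  have h1 : (2 * ((n:ℝ) - 1) * a - ((n:ℝ) - 2) / 2) * I1
      ≥ (2 * ((n:ℝ) - 1) * a - ((n:ℝ) - 2) / 2) * (r₁ * L) :=
    mul_le_mul_of_nonpos_left hI1ub hc1
  have h2 : -(2 * ((n:ℝ) - 1) * a - (n:ℝ) / 2) * L * I2
      ≥ -(2 * ((n:ℝ) - 1) * a - (n:ℝ) / 2) * L * r₀ := by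
    apply mul_le_mul_of_nonneg_left hI2lb
    apply mul_nonneg _ hL
    nlinarith
  have h3 : 0 ≤ 2 * ((n:ℝ) - 1) * a * (r₁ - r₀) * L := by
    apply mul_nonneg _ hL
    apply mul_nonneg (mul_nonneg (by linarith) ha0) (by linarith)
  nlinarith [h1, h2, h3]
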